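/- Fix θ > 0 and let P = (P_j)_{j≥1} be the GEM(0,θ) random discrete distribution: P_j := H_j·Π_{i=1}^{j-1}(1 - H_i) with (H_i)_{i≥1} i.i.d. Beta(1,θ). Let X be a real random variable and (X_j)_{j≥1} i.i.d. copies of X independent of (H_i)_{i≥1}. Then: if E[log(1 + |X|)] < ∞, the series Σ_{j≥1} X_j·P_j converges absolutely almost surely; and if E[log(1 + |X|)] = ∞, then Σ_{j≥1} |X_j|·P_j = ∞ almost surely. -/

import Mathlib

open MeasureTheory ProbabilityTheory
open scoped ENNReal

section FTAux

lemma FT_neg_log_le {t p : ℝ} (ht : 0 < t) (hp : 0 < p) : -Real.log t ≤ t ^ (-p) / p := by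
  have h2 : Real.log t⁻¹ = (1/p) * Real.log (t⁻¹ ^ p) := by
    rw [Real.log_rpow (inv_pos.2 ht)]; field_simp
  have h3 : Real.log (t⁻¹ ^ p) ≤ t⁻¹ ^ p := by
    have := Real.log_le_sub_one_of_pos (Real.rpow_pos_of_pos (inv_pos.2 ht) p)
    linarith
  have h4 : t⁻¹ ^ p = t ^ (-p) := by
    rw [Real.rpow_neg ht.le, Real.inv_rpow ht.le]
  have h5 : (1/p) * Real.log (t⁻¹ ^ p) ≤ (1/p) * (t⁻¹ ^ p) :=
    mul_le_mul_of_nonneg_left h3 (by positivity)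
  calc -Real.log t = (1/p) * Real.log (t⁻¹ ^ p) := by rw [← h2, Real.log_inv]
    _ ≤ (1/p) * (t⁻¹ ^ p) := h5
    _ = t ^ (-p) / p := by rw [h4]; ring

end FTAux

/-- The Beta(a,b) distribution on `ℝ`. -/
noncomputable def betaMeasure (a b : ℝ) : Measure ℝ :=
  MeasureTheory.volume.withDensity fun u =>
    ENNReal.ofReal (Set.indicator (Set.Ioo 0 1)
      (fun u => u ^ (a - 1) * (1 - u) ^ (b - 1) *
        Real.Gamma (a + b) / (Real.Gamma a * Real.Gamma b)) u)

section FTBeta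
open Filter Set

lemma FT_betaDensity_one_eq {θ : ℝ} (hθ : 0 < θ) :
    (fun u : ℝ => ENNReal.ofReal (Set.indicator (Set.Ioo 0 1)
      (fun u => u ^ ((1:ℝ) - 1) * (1 - u) ^ (θ - 1) *
        Real.Gamma (1 + θ) / (Real.Gamma 1 * Real.Gamma θ)) u))
    = fun u : ℝ => ENNReal.ofReal (Set.indicator (Set.Ioo 0 1)
        (fun u => θ * (1 - u) ^ (θ - 1)) u) := by
  funext u
  congr 1
  by_cases hu : u ∈ Set.Ioo (0:ℝ) 1
  · rw [Set.indicator_of_mem hu, Set.indicator_of_mem hu, sub_self, Real.rpow_zero,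
      Real.Gamma_one, add_comm, Real.Gamma_add_one hθ.ne']
    have : Real.Gamma θ ≠ 0 := (Real.Gamma_pos_of_pos hθ).ne'
    field_simp
  · rw [Set.indicator_of_notMem hu, Set.indicator_of_notMem hu]

lemma FT_betaMeasure_one {θ : ℝ} (hθ : 0 < θ) :
    _root_.betaMeasure 1 θ = MeasureTheory.volume.withDensity
      (fun u : ℝ => ENNReal.ofReal (Set.indicator (Set.Ioo 0 1)
        (fun u => θ * (1 - u) ^ (θ - 1)) u)) := by
  rw [_root_.betaMeasure, FT_betaDensity_one_eq hθ]

lemma FT_betaDensity_meas {θ : ℝ} : Measurable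
    (fun u : ℝ => ENNReal.ofReal (Set.indicator (Set.Ioo 0 1)
        (fun u => θ * (1 - u) ^ (θ - 1)) u)) := by
  apply Measurable.ennreal_ofReal
  exact Measurable.indicator (by fun_prop) measurableSet_Ioo

lemma FT_betaMeasure_compl {θ : ℝ} (hθ : 0 < θ) :
    _root_.betaMeasure 1 θ (Set.Ioo (0:ℝ) 1)ᶜ = 0 := by
  rw [FT_betaMeasure_one hθ, withDensity_apply _ measurableSet_Ioo.compl]
  have : ∀ u ∈ (Set.Ioo (0:ℝ) 1)ᶜ, ENNReal.ofReal (Set.indicator (Set.Ioo 0 1)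
        (fun u => θ * (1 - u) ^ (θ - 1)) u) = 0 := by
    intro u hu
    rw [Set.indicator_of_notMem hu]
    simp
  rw [setLIntegral_congr_fun measurableSet_Ioo.compl this]
  simp

lemma FT_integrableOn_bound {r : ℝ} (hr : -1 < r) :
    IntegrableOn (fun u : ℝ => 2 * (1 - u) ^ r) (Set.Ioo 0 1) MeasureTheory.volume := by
  have h1 : IntervalIntegrable (fun x : ℝ => x ^ r) MeasureTheory.volume 0 1 :=
    intervalIntegral.intervalIntegrable_rpow' hr
  have h2 : IntervalIntegrable (fun x : ℝ => (1 - x) ^ r) MeasureTheory.volume 0 1 := by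
    have := (h1.comp_sub_left 1).symm
    simpa using this
  have h3 : IntervalIntegrable (fun x : ℝ => 2 * (1 - x) ^ r) MeasureTheory.volume 0 1 :=
    h2.const_mul 2
  have := (intervalIntegrable_iff.1 h3)
  rw [Set.uIoc_of_le (by norm_num : (0:ℝ) ≤ 1)] at this
  exact this.mono_set Set.Ioo_subset_Ioc_self

lemma FT_beta_log_lintegral_lt_top {θ : ℝ} (hθ : 0 < θ) :
    ∫⁻ u, ENNReal.ofReal |Real.log (1 - u)| ∂(_root_.betaMeasure 1 θ) < ∞ := by
  have hg : Measurable fun u : ℝ => ENNReal.ofReal |Real.log (1 - u)| := by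
    apply Measurable.ennreal_ofReal
    exact (Real.measurable_log.comp (measurable_const.sub measurable_id)).abs
  rw [FT_betaMeasure_one hθ, lintegral_withDensity_eq_lintegral_mul _ FT_betaDensity_meas hg]
  have key : ∀ u : ℝ, (ENNReal.ofReal (Set.indicator (Set.Ioo 0 1)
        (fun u => θ * (1 - u) ^ (θ - 1)) u)) * ENNReal.ofReal |Real.log (1 - u)|
      ≤ Set.indicator (Set.Ioo 0 1) (fun u => ENNReal.ofReal (2 * (1 - u) ^ (θ/2 - 1))) u := by
    intro u
    by_cases hu : u ∈ Set.Ioo (0:ℝ) 1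
    · rw [Set.indicator_of_mem hu, Set.indicator_of_mem hu, ← ENNReal.ofReal_mul (by
        have : (0:ℝ) < 1 - u := by linarith [hu.2]
        positivity)]
      apply ENNReal.ofReal_le_ofReal
      have h1u : (0:ℝ) < 1 - u := by linarith [hu.2]
      have hlog : Real.log (1 - u) ≤ 0 := Real.log_nonpos (by linarith [hu.1]) (by linarith [hu.1])
      rw [abs_of_nonpos hlog]
      have hb := FT_neg_log_le h1u (by positivity : (0:ℝ) < θ/2)
      calc θ * (1 - u) ^ (θ - 1) * -Real.log (1 - u)
          ≤ θ * (1 - u) ^ (θ - 1) * ((1 - u) ^ (-(θ/2)) / (θ/2)) := by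
            apply mul_le_mul_of_nonneg_left hb (by positivity)
        _ = 2 * ((1 - u) ^ (θ - 1) * (1 - u) ^ (-(θ/2))) := by field_simp
        _ = 2 * (1 - u) ^ (θ/2 - 1) := by
            rw [← Real.rpow_add h1u]; ring_nf
    · rw [Set.indicator_of_notMem hu, Set.indicator_of_notMem hu]
      simp
  calc ∫⁻ u, (ENNReal.ofReal (Set.indicator (Set.Ioo 0 1)
        (fun u => θ * (1 - u) ^ (θ - 1)) u) * ENNReal.ofReal |Real.log (1 - u)|)
      ≤ ∫⁻ u, Set.indicator (Set.Ioo 0 1) (fun u => ENNReal.ofReal (2 * (1 - u) ^ (θ/2 - 1))) u :=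
        lintegral_mono key
    _ = ∫⁻ u in Set.Ioo 0 1, ENNReal.ofReal (2 * (1 - u) ^ (θ/2 - 1)) :=
        lintegral_indicator measurableSet_Ioo _
    _ < ∞ := (FT_integrableOn_bound (by linarith)).lintegral_lt_top

variable {Ω : Type*} [MeasurableSpace Ω] {μ : Measure Ω} [IsProbabilityMeasure μ]
  {θ : ℝ} {h : Ω → ℝ}

omit [IsProbabilityMeasure μ] in
lemma FT_h_mem_Ioo (hθ : 0 < θ) (hm : Measurable h)
    (hlaw : Measure.map h μ = _root_.betaMeasure 1 θ) :
    ∀ᵐ ω ∂μ, h ω ∈ Set.Ioo (0:ℝ) 1 := by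
  have : μ (h ⁻¹' (Set.Ioo (0:ℝ) 1)ᶜ) = 0 := by
    rw [← Measure.map_apply hm measurableSet_Ioo.compl, hlaw, FT_betaMeasure_compl hθ]
  exact this

omit [IsProbabilityMeasure μ] in
lemma FT_log_one_sub_integrable (hθ : 0 < θ) (hm : Measurable h)
    (hlaw : Measure.map h μ = _root_.betaMeasure 1 θ) :
    Integrable (fun ω => Real.log (1 - h ω)) μ := by
  have hg : Measurable fun x : ℝ => ENNReal.ofReal |Real.log (1 - x)| := by
    apply Measurable.ennreal_ofReal
    exact (Real.measurable_log.comp (measurable_const.sub measurable_id)).abs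
  constructor
  · exact ((Real.measurable_log.comp (measurable_const.sub hm)).aestronglyMeasurable)
  · rw [hasFiniteIntegral_def]
    have e1 : ∀ ω, ‖Real.log (1 - h ω)‖ₑ
        = (fun x => ENNReal.ofReal |Real.log (1 - x)|) (h ω) := fun ω =>
      Real.enorm_eq_ofReal_abs _
    rw [lintegral_congr e1, ← lintegral_map hg hm, hlaw]
    exact FT_beta_log_lintegral_lt_top hθ

lemma FT_log_one_sub_integral_neg (hθ : 0 < θ) (hm : Measurable h)
    (hlaw : Measure.map h μ = _root_.betaMeasure 1 θ) :
    (∫ ω, Real.log (1 - h ω) ∂μ) < 0 := by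
  have hint := FT_log_one_sub_integrable hθ hm hlaw
  have hae := FT_h_mem_Ioo hθ hm hlaw
  have hnonneg : 0 ≤ᵐ[μ] fun ω => -Real.log (1 - h ω) := by
    filter_upwards [hae] with ω hω
    have : Real.log (1 - h ω) ≤ 0 := Real.log_nonpos (by linarith [hω.2]) (by linarith [hω.1])
    simpa using this
  have hpos : 0 < ∫ ω, -Real.log (1 - h ω) ∂μ := by
    rw [integral_pos_iff_support_of_nonneg_ae hnonneg hint.neg]
    have hsub : {ω | h ω ∈ Set.Ioo (0:ℝ) 1} ⊆ Function.support fun ω => -Real.log (1 - h ω) := by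
      intro ω hω
      have h1 : (0:ℝ) < 1 - h ω := by linarith [hω.2]
      have h2 : 1 - h ω < 1 := by linarith [hω.1]
      have : Real.log (1 - h ω) < 0 := Real.log_neg h1 h2
      simp only [Function.mem_support]
      intro hc
      rw [neg_eq_zero] at hc
      exact this.ne hc
    have hms : MeasurableSet {ω | h ω ∈ Set.Ioo (0:ℝ) 1} := hm measurableSet_Ioo
    have h1 : μ {ω | h ω ∈ Set.Ioo (0:ℝ) 1} = 1 := by
      rw [← prob_compl_eq_zero_iff hms, Set.compl_setOf]
      exact ae_iff.1 hae
    calc (0:ℝ≥0∞) < 1 := by norm_num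
      _ = μ {ω | h ω ∈ Set.Ioo (0:ℝ) 1} := h1.symm
      _ ≤ μ (Function.support fun ω => -Real.log (1 - h ω)) := measure_mono hsub
  rw [integral_neg] at hpos
  linarith

lemma FT_betaMeasure_Iic_le (hθ : 0 < θ) {t : ℝ} (ht' : t ≤ Real.exp (-1)) :
    _root_.betaMeasure 1 θ (Set.Iic t)
      ≤ ENNReal.ofReal (θ * max 1 ((1 - Real.exp (-1)) ^ (θ-1))) * ENNReal.ofReal t := by
  set K := max 1 ((1 - Real.exp (-1)) ^ (θ-1)) with hK
  have he1 : (0:ℝ) < 1 - Real.exp (-1) := by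
    have : Real.exp (-1) < 1 := Real.exp_lt_one_iff.2 (by norm_num)
    linarith
  rw [FT_betaMeasure_one hθ, withDensity_apply _ measurableSet_Iic]
  have hbd : ∀ u ∈ Set.Iic t, ENNReal.ofReal (Set.indicator (Set.Ioo 0 1)
        (fun u => θ * (1 - u) ^ (θ - 1)) u)
      ≤ Set.indicator (Set.Ioc 0 t) (fun _ => ENNReal.ofReal (θ * K)) u := by
    intro u hu
    by_cases h01 : u ∈ Set.Ioo (0:ℝ) 1
    · have hut : u ∈ Set.Ioc (0:ℝ) t := ⟨h01.1, hu⟩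
      rw [Set.indicator_of_mem h01, Set.indicator_of_mem hut]
      apply ENNReal.ofReal_le_ofReal
      have h1u : (0:ℝ) < 1 - u := by linarith [h01.2]
      have hue : u ≤ Real.exp (-1) := le_trans hu ht'
      have hcase : (1 - u) ^ (θ - 1) ≤ K := by
        rcases le_or_gt 1 θ with hθ1 | hθ1
        · exact le_trans (Real.rpow_le_one h1u.le (by linarith [h01.1]) (by linarith))
            (le_max_left _ _)
        · refine le_trans ?_ (le_max_right _ _)
          exact Real.rpow_le_rpow_of_nonpos he1 (by linarith) (by linarith)
      exact mul_le_mul_of_nonneg_left hcase hθ.le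
    · rw [Set.indicator_of_notMem h01]
      simp
  calc ∫⁻ u in Set.Iic t, ENNReal.ofReal (Set.indicator (Set.Ioo 0 1)
        (fun u => θ * (1 - u) ^ (θ - 1)) u)
      ≤ ∫⁻ u in Set.Iic t, Set.indicator (Set.Ioc 0 t) (fun _ => ENNReal.ofReal (θ * K)) u :=
        setLIntegral_mono' measurableSet_Iic hbd
    _ ≤ ∫⁻ u, Set.indicator (Set.Ioc 0 t) (fun _ => ENNReal.ofReal (θ * K)) u :=
        setLIntegral_le_lintegral _ _
    _ = ENNReal.ofReal (θ * K) * MeasureTheory.volume (Set.Ioc 0 t) :=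
        lintegral_indicator_const measurableSet_Ioc _
    _ ≤ ENNReal.ofReal (θ * K) * ENNReal.ofReal t := by
        rw [Real.volume_Ioc]
        exact mul_le_mul_right (ENNReal.ofReal_le_ofReal (by linarith)) _

omit [IsProbabilityMeasure μ] in
lemma FT_tsum_meas_gt_eq_top {g : Ω → ℝ} (hg : Measurable g) {M : ℝ} (hM : 0 < M)
    (hinf : ∫⁻ ω, ENNReal.ofReal (g ω) ∂μ = ∞) :
    ∑' j : ℕ, μ {ω | M * j < g ω} = ∞ := by
  have hDmeas : ∀ j : ℕ, MeasurableSet {ω | M * j < g ω} := fun j =>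
    measurableSet_lt measurable_const hg
  have hpt : ∀ ω, ENNReal.ofReal (g ω)
      ≤ ∑' j : ℕ, Set.indicator {ω | M * j < g ω} (fun _ => ENNReal.ofReal M) ω := by
    intro ω
    set n := ⌈g ω / M⌉₊ with hn
    have hterm : ∀ j ∈ Finset.range n,
        Set.indicator {ω | M * j < g ω} (fun _ => ENNReal.ofReal M) ω = ENNReal.ofReal M := by
      intro j hj
      have : (j : ℝ) < g ω / M := Nat.lt_ceil.1 (Finset.mem_range.1 hj)
      have hmem : ω ∈ {ω | M * j < g ω} := by
        have := (lt_div_iff₀ hM).1 this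
        simpa [mul_comm] using this
      rw [Set.indicator_of_mem hmem]
    calc ENNReal.ofReal (g ω) ≤ ENNReal.ofReal ((n : ℝ) * M) := by
          apply ENNReal.ofReal_le_ofReal
          have := Nat.le_ceil (g ω / M)
          have := (div_le_iff₀ hM).1 this
          linarith
      _ = (n : ℝ≥0∞) * ENNReal.ofReal M := by
          rw [ENNReal.ofReal_mul (by positivity), ENNReal.ofReal_natCast]
      _ = ∑ j ∈ Finset.range n,
            Set.indicator {ω | M * j < g ω} (fun _ => ENNReal.ofReal M) ω := by
          rw [Finset.sum_congr rfl hterm, Finset.sum_const, Finset.card_range, nsmul_eq_mul]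
      _ ≤ _ := ENNReal.sum_le_tsum _
  have h1 : (⊤ : ℝ≥0∞) ≤ ENNReal.ofReal M * ∑' j : ℕ, μ {ω | M * j < g ω} := by
    calc (⊤ : ℝ≥0∞) = ∫⁻ ω, ENNReal.ofReal (g ω) ∂μ := hinf.symm
      _ ≤ ∫⁻ ω, ∑' j : ℕ, Set.indicator {ω | M * j < g ω} (fun _ => ENNReal.ofReal M) ω ∂μ :=
          lintegral_mono hpt
      _ = ∑' j : ℕ, ∫⁻ ω, Set.indicator {ω | M * j < g ω} (fun _ => ENNReal.ofReal M) ω ∂μ :=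
          lintegral_tsum fun j => ((measurable_const.indicator (hDmeas j)).aemeasurable)
      _ = ∑' j : ℕ, ENNReal.ofReal M * μ {ω | M * j < g ω} :=
          tsum_congr fun j => lintegral_indicator_const (hDmeas j) _
      _ = ENNReal.ofReal M * ∑' j : ℕ, μ {ω | M * j < g ω} := ENNReal.tsum_mul_left
  by_contra hne
  exact (ENNReal.mul_ne_top ENNReal.ofReal_ne_top hne) (top_le_iff.1 h1)

end FTBeta

open Filter in
/-- Feigin–Tweedie criterion for GEM(0,θ) means: with `P_j = H_j ∏_{i<j}(1-H_i)` for i.i.d.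
`H_i ~ Beta(1,θ)` and i.i.d. copies `(X_j)` of `X` independent of `(H_i)`: if
`E[log(1+|X|)] < ∞` then `∑_j X_j P_j` converges absolutely a.s., and if
`E[log(1+|X|)] = ∞` then `∑_j |X_j| P_j = ∞` a.s. -/
theorem stmt17 {Ω : Type*} [MeasurableSpace Ω] (μ : Measure Ω) [IsProbabilityMeasure μ]
    (θ : ℝ) (hθ : 0 < θ)
    (H : ℕ → Ω → ℝ) (hHmeas : ∀ i, Measurable (H i))
    (hHiid : iIndepFun H μ)
    (hHlaw : ∀ i, Measure.map (H i) μ = _root_.betaMeasure 1 θ)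
    (P : ℕ → Ω → ℝ)
    (hP : ∀ j ω, P j ω = H j ω * ∏ i ∈ Finset.range j, (1 - H i ω))
    (X : Ω → ℝ) (hXmeas : Measurable X)
    (Xs : ℕ → Ω → ℝ) (hXsmeas : ∀ j, Measurable (Xs j))
    (hXsiid : iIndepFun Xs μ)
    (hXsid : ∀ j, IdentDistrib (Xs j) X μ μ)
    (hXsindep : IndepFun (fun ω => fun j => Xs j ω) (fun ω => fun i => H i ω) μ) :
    ((∫⁻ ω, ENNReal.ofReal (Real.log (1 + |X ω|)) ∂μ) < ∞ →
      ∀ᵐ ω ∂μ, Summable fun j => |Xs j ω * P j ω|) ∧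
    ((∫⁻ ω, ENNReal.ofReal (Real.log (1 + |X ω|)) ∂μ) = ∞ →
      ∀ᵐ ω ∂μ, ∑' j, ENNReal.ofReal (|Xs j ω| * P j ω) = ∞) := by
  have mg : Measurable fun x : ℝ => Real.log (1 - x) :=
    Real.measurable_log.comp (measurable_const.sub measurable_id)
  set Y : ℕ → Ω → ℝ := fun i ω => Real.log (1 - H i ω) with hY
  have hYint : Integrable (Y 0) μ := FT_log_one_sub_integrable hθ (hHmeas 0) (hHlaw 0)
  have hident : ∀ i, IdentDistrib (Y i) (Y 0) μ μ := by
    intro i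
    have hHi : IdentDistrib (H i) (H 0) μ μ :=
      ⟨(hHmeas i).aemeasurable, (hHmeas 0).aemeasurable, by rw [hHlaw i, hHlaw 0]⟩
    exact hHi.comp mg
  have hpair : Pairwise (Function.onFun (IndepFun · · μ) Y) := fun i j hij =>
    (hHiid.indepFun hij).comp mg mg
  set L : ℝ := ∫ ω, Y 0 ω ∂μ with hLdef
  have hL : L < 0 := FT_log_one_sub_integral_neg hθ (hHmeas 0) (hHlaw 0)
  have hslln := ProbabilityTheory.strong_law_ae_real Y hYint hpair hident
  have hH01 : ∀ᵐ ω ∂μ, ∀ i, H i ω ∈ Set.Ioo (0:ℝ) 1 :=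
    ae_all_iff.2 fun i => FT_h_mem_Ioo hθ (hHmeas i) (hHlaw i)
  have mW : Measurable fun x : ℝ => Real.log (1 + |x|) :=
    Real.measurable_log.comp (measurable_const.add measurable_abs)
  constructor
  · -- convergence part
    intro hfin
    set ε : ℝ := -L/4 with hε
    have hεpos : 0 < ε := by rw [hε]; linarith
    set Z : Ω → ℝ := fun ω => Real.log (1 + |X ω|) / ε with hZ
    have hZnn : 0 ≤ Z := fun ω =>
      div_nonneg (Real.log_nonneg (by linarith [abs_nonneg (X ω)])) hεpos.le
    have hW_int : Integrable (fun ω => Real.log (1 + |X ω|)) μ := by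
      constructor
      · exact (mW.comp hXmeas).aestronglyMeasurable
      · rw [hasFiniteIntegral_def]
        have e1 : ∀ ω, ‖Real.log (1 + |X ω|)‖ₑ
            = ENNReal.ofReal (Real.log (1 + |X ω|)) := fun ω =>
          Real.enorm_eq_ofReal (Real.log_nonneg (by linarith [abs_nonneg (X ω)]))
        rw [lintegral_congr e1]
        exact hfin
    have hZint : Integrable Z μ := hW_int.div_const ε
    have key : (∑' j : ℕ, μ {ω | Z ω ∈ Set.Ioi (j:ℝ)}) < ∞ := by
      letI : MeasureSpace Ω := ⟨μ⟩
      exact ProbabilityTheory.tsum_prob_mem_Ioi_lt_top hZint hZnn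
    set A : ℕ → Set Ω := fun j => {ω | Real.log (1 + |Xs j ω|) / ε ∈ Set.Ioi (j:ℝ)} with hA
    have hAeq : ∀ j, μ (A j) = μ {ω | Z ω ∈ Set.Ioi (j:ℝ)} := by
      intro j
      have hid : IdentDistrib (fun ω => Real.log (1 + |Xs j ω|) / ε) Z μ μ :=
        (hXsid j).comp (mW.div_const ε)
      exact hid.measure_mem_eq measurableSet_Ioi
    have hsum : (∑' j, μ (A j)) ≠ ∞ := by
      rw [tsum_congr hAeq]; exact key.ne
    have hBC := MeasureTheory.ae_eventually_notMem hsum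
    filter_upwards [hslln, hH01, hBC] with ω h1 h2 h3
    have hLhalf : ∀ᶠ n in atTop, (∑ i ∈ Finset.range n, Y i ω) / n < L/2 :=
      h1.eventually_lt_const (by linarith)
    obtain ⟨N₁, hN₁⟩ := eventually_atTop.1 hLhalf
    obtain ⟨N₂, hN₂⟩ := eventually_atTop.1 h3
    set r : ℝ := Real.exp (L/4) with hr
    have hr0 : 0 ≤ r := (Real.exp_pos _).le
    have hr1 : r < 1 := Real.exp_lt_one_iff.2 (by linarith)
    set N := max N₁ N₂ + 1 with hN
    have hbound : ∀ j, N ≤ j → |Xs j ω * P j ω| ≤ r ^ j := by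
      intro j hj
      have hj1 : 1 ≤ j := le_trans (Nat.le_add_left 1 _) hj
      have hjN₁ : N₁ ≤ j := le_trans (le_trans (le_max_left _ _) (Nat.le_succ _)) hj
      have hjN₂ : N₂ ≤ j := le_trans (le_trans (le_max_right _ _) (Nat.le_succ _)) hj
      have hjpos : (0:ℝ) < j := by exact_mod_cast hj1
      have hprodpos : 0 < ∏ i ∈ Finset.range j, (1 - H i ω) :=
        Finset.prod_pos fun i _ => by linarith [(h2 i).2]
      have hPnn : 0 ≤ P j ω := by
        rw [hP]; exact mul_nonneg (h2 j).1.le hprodpos.le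
      have hprodexp : ∏ i ∈ Finset.range j, (1 - H i ω)
          = Real.exp (∑ i ∈ Finset.range j, Y i ω) := by
        rw [Real.exp_sum]
        exact Finset.prod_congr rfl fun i _ => (Real.exp_log (by linarith [(h2 i).2])).symm
      have hsumle : ∑ i ∈ Finset.range j, Y i ω ≤ L/2 * j := by
        have := hN₁ j hjN₁
        rw [div_lt_iff₀ hjpos] at this
        linarith
      have hXsle : |Xs j ω| ≤ Real.exp (ε * j) := by
        have h3j := hN₂ j hjN₂
        simp only [hA, Set.mem_setOf_eq, Set.mem_Ioi, not_lt] at h3j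
        have hlog : Real.log (1 + |Xs j ω|) ≤ ε * j := by
          rw [div_le_iff₀ hεpos] at h3j
          linarith
        calc |Xs j ω| ≤ 1 + |Xs j ω| := by linarith [abs_nonneg (Xs j ω)]
          _ = Real.exp (Real.log (1 + |Xs j ω|)) :=
              (Real.exp_log (by linarith [abs_nonneg (Xs j ω)])).symm
          _ ≤ Real.exp (ε * j) := Real.exp_le_exp.2 hlog
      have hPle : P j ω ≤ Real.exp (L/2 * j) := by
        rw [hP]
        calc H j ω * ∏ i ∈ Finset.range j, (1 - H i ω)
            ≤ 1 * ∏ i ∈ Finset.range j, (1 - H i ω) :=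
              mul_le_mul_of_nonneg_right (h2 j).2.le hprodpos.le
          _ = ∏ i ∈ Finset.range j, (1 - H i ω) := one_mul _
          _ = Real.exp (∑ i ∈ Finset.range j, Y i ω) := hprodexp
          _ ≤ Real.exp (L/2 * j) := Real.exp_le_exp.2 hsumle
      calc |Xs j ω * P j ω| = |Xs j ω| * P j ω := by rw [abs_mul, abs_of_nonneg hPnn]
        _ ≤ Real.exp (ε * j) * Real.exp (L/2 * j) :=
            mul_le_mul hXsle hPle hPnn (Real.exp_pos _).le
        _ = Real.exp ((j:ℝ) * (L/4)) := by
            rw [← Real.exp_add]; congr 1; rw [hε]; ring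
        _ = r ^ j := Real.exp_nat_mul _ j
    rw [← summable_nat_add_iff N]
    have hgeo : Summable fun j : ℕ => r ^ (j + N) :=
      (summable_nat_add_iff N).2 (summable_geometric_of_lt_one hr0 hr1)
    exact Summable.of_nonneg_of_le (fun j => abs_nonneg _)
      (fun j => hbound (j + N) (Nat.le_add_left N j)) hgeo
  · -- divergence part
    intro hinf
    set M : ℝ := 4 - L with hM
    have hMpos : 0 < M := by rw [hM]; linarith
    set S : ℕ → Set ℝ := fun j => {x | M * j < Real.log (1 + |x|)} with hS
    have hSmeas : ∀ j, MeasurableSet (S j) := fun j =>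
      measurableSet_lt measurable_const mW
    set C : ℕ → Set Ω := fun j => Xs j ⁻¹' S j with hC
    have hCmeas : ∀ j, MeasurableSet (C j) := fun j => (hXsmeas j) (hSmeas j)
    have hCindep : iIndepSet C μ := (iIndepSet_iff_meas_biInter hCmeas).2
      (fun s => hXsiid.measure_inter_preimage_eq_mul s (fun i _ => hSmeas i))
    have hCD : ∀ j, μ (C j) = μ {ω | M * j < Real.log (1 + |X ω|)} := fun j =>
      (hXsid j).measure_mem_eq (hSmeas j)
    have hDsum : ∑' j : ℕ, μ {ω | M * j < Real.log (1 + |X ω|)} = ∞ :=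
      FT_tsum_meas_gt_eq_top (mW.comp hXmeas) hMpos hinf
    have hCsum : ∑' j, μ (C j) = ∞ := by rw [tsum_congr hCD]; exact hDsum
    have hlim := ProbabilityTheory.measure_limsup_eq_one hCmeas hCindep hCsum
    have hfreq : ∀ᵐ ω ∂μ, ∃ᶠ j in atTop, ω ∈ C j := by
      have hms : MeasurableSet (limsup C atTop) := .measurableSet_limsup hCmeas
      have hcompl : μ (limsup C atTop)ᶜ = 0 := by
        rw [prob_compl_eq_zero_iff hms]; exact hlim
      refine ae_iff.2 ?_
      have : {ω | ¬ ∃ᶠ j in atTop, ω ∈ C j} = (limsup C atTop)ᶜ := by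
        ext ω; simp [mem_limsup_iff_frequently_mem]
      rw [this]; exact hcompl
    have hBsum : (∑' j : ℕ, μ {ω | H j ω ≤ Real.exp (-(j:ℝ) - 1)}) ≠ ∞ := by
      set Kc : ℝ≥0∞ := ENNReal.ofReal (θ * max 1 ((1 - Real.exp (-1)) ^ (θ-1))) with hKc
      have hle : ∀ j : ℕ, μ {ω | H j ω ≤ Real.exp (-(j:ℝ) - 1)}
          ≤ Kc * ENNReal.ofReal (Real.exp (-(j:ℝ) - 1)) := by
        intro j
        have hset : {ω | H j ω ≤ Real.exp (-(j:ℝ) - 1)}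
            = H j ⁻¹' Set.Iic (Real.exp (-(j:ℝ) - 1)) := rfl
        rw [hset, ← Measure.map_apply (hHmeas j) measurableSet_Iic, hHlaw j]
        exact FT_betaMeasure_Iic_le hθ (Real.exp_le_exp.2 (by
          have : (0:ℝ) ≤ (j:ℝ) := Nat.cast_nonneg j
          linarith))
      have hsummable : Summable (fun j : ℕ => Real.exp (-(j:ℝ) - 1)) := by
        have heq : (fun j : ℕ => Real.exp (-(j:ℝ) - 1))
            = fun j => Real.exp (-1) * (Real.exp (-1:ℝ)) ^ j := by
          funext j
          rw [← Real.exp_nat_mul, ← Real.exp_add]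
          congr 1; ring
        rw [heq]
        exact (summable_geometric_of_lt_one (Real.exp_pos _).le
          (Real.exp_lt_one_iff.2 (by norm_num))).mul_left _
      have hfin2 : (∑' j : ℕ, ENNReal.ofReal (Real.exp (-(j:ℝ) - 1))) < ∞ := by
        rw [← ENNReal.ofReal_tsum_of_nonneg (fun j => (Real.exp_pos _).le) hsummable]
        exact ENNReal.ofReal_lt_top
      have : (∑' j : ℕ, μ {ω | H j ω ≤ Real.exp (-(j:ℝ) - 1)}) < ∞ :=
        calc (∑' j : ℕ, μ {ω | H j ω ≤ Real.exp (-(j:ℝ) - 1)})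
            ≤ ∑' j : ℕ, Kc * ENNReal.ofReal (Real.exp (-(j:ℝ) - 1)) := ENNReal.tsum_le_tsum hle
          _ = Kc * ∑' j : ℕ, ENNReal.ofReal (Real.exp (-(j:ℝ) - 1)) := ENNReal.tsum_mul_left
          _ < ∞ := ENNReal.mul_lt_top ENNReal.ofReal_lt_top hfin2
      exact this.ne
    have hB := MeasureTheory.ae_eventually_notMem hBsum
    filter_upwards [hslln, hH01, hB, hfreq] with ω h1 h2 h3 h4
    have hLlow : ∀ᶠ n in atTop, L - 1 < (∑ i ∈ Finset.range n, Y i ω) / n :=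
      h1.eventually_const_lt (by linarith)
    obtain ⟨N₁, hN₁⟩ := eventually_atTop.1 hLlow
    obtain ⟨N₂, hN₂⟩ := eventually_atTop.1 h3
    apply ENNReal.eq_top_of_forall_nnreal_le
    intro q
    set N₀ := max (max N₁ N₂ + 1) ⌈((q:ℝ)+1)/2⌉₊ with hN₀
    obtain ⟨j, hjC, hjN₀⟩ := (h4.and_eventually (eventually_ge_atTop N₀)).exists
    have hj1 : 1 ≤ j := le_trans (le_trans (Nat.le_add_left 1 _) (le_max_left _ _)) hjN₀
    have hjN₁ : N₁ ≤ j := le_trans (le_trans (le_trans (le_max_left _ _) (Nat.le_succ _))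
      (le_max_left _ _)) hjN₀
    have hjN₂ : N₂ ≤ j := le_trans (le_trans (le_trans (le_max_right _ _) (Nat.le_succ _))
      (le_max_left _ _)) hjN₀
    have hjq : ((q:ℝ)+1)/2 ≤ j := le_trans (Nat.le_ceil _)
      (by exact_mod_cast le_trans (le_max_right _ _) hjN₀)
    have hjpos : (0:ℝ) < j := by exact_mod_cast hj1
    -- lower bound on P j ω
    have hHj : Real.exp (-(j:ℝ) - 1) < H j ω := by
      have := hN₂ j hjN₂
      simpa using (lt_of_not_ge this)
    have hprodexp : ∏ i ∈ Finset.range j, (1 - H i ω)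
        = Real.exp (∑ i ∈ Finset.range j, Y i ω) := by
      rw [Real.exp_sum]
      exact Finset.prod_congr rfl fun i _ => (Real.exp_log (by linarith [(h2 i).2])).symm
    have hsumge : (L - 1) * j ≤ ∑ i ∈ Finset.range j, Y i ω := by
      have := hN₁ j hjN₁
      rw [lt_div_iff₀ hjpos] at this
      linarith
    have hPge : Real.exp ((L-2) * j - 1) ≤ P j ω := by
      rw [hP, hprodexp]
      calc Real.exp ((L-2) * j - 1) = Real.exp (-(j:ℝ) - 1) * Real.exp ((L-1) * j) := by
            rw [← Real.exp_add]; congr 1; ring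
        _ ≤ H j ω * Real.exp (∑ i ∈ Finset.range j, Y i ω) := by
            apply mul_le_mul hHj.le (Real.exp_le_exp.2 hsumge) (Real.exp_pos _).le
            linarith [Real.exp_pos (-(j:ℝ) - 1)]
    -- lower bound on |Xs j ω|
    have hXsge : Real.exp (M * j) - 1 ≤ |Xs j ω| := by
      have hjC' : M * j < Real.log (1 + |Xs j ω|) := hjC
      have : Real.exp (M * j) < 1 + |Xs j ω| := by
        calc Real.exp (M * j) < Real.exp (Real.log (1 + |Xs j ω|)) := Real.exp_lt_exp.2 hjC'
          _ = 1 + |Xs j ω| := Real.exp_log (by linarith [abs_nonneg (Xs j ω)])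
      linarith
    have hterm : (q:ℝ) ≤ |Xs j ω| * P j ω := by
      have hexpMj : (1:ℝ) ≤ Real.exp (M * j) :=
        Real.one_le_exp (by positivity)
      have h5 : (Real.exp (M * j) - 1) * Real.exp ((L-2) * j - 1) ≤ |Xs j ω| * P j ω :=
        mul_le_mul hXsge hPge (Real.exp_pos _).le (by linarith [abs_nonneg (Xs j ω)])
      have h6 : (Real.exp (M * j) - 1) * Real.exp ((L-2) * j - 1)
          = Real.exp (2 * j - 1) - Real.exp ((L-2) * j - 1) := by
        rw [sub_mul, one_mul, ← Real.exp_add]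
        congr 2
        rw [hM]; ring
      have h7 : Real.exp ((L-2) * j - 1) ≤ 1 := by
        apply Real.exp_le_one_iff.2
        nlinarith
      have h8 : 2 * (j:ℝ) ≤ Real.exp (2 * j - 1) := by
        have := Real.add_one_le_exp (2 * (j:ℝ) - 1)
        linarith
      nlinarith
    calc (q : ℝ≥0∞) = ENNReal.ofReal (q:ℝ) := ENNReal.ofReal_coe_nnreal.symm
      _ ≤ ENNReal.ofReal (|Xs j ω| * P j ω) := ENNReal.ofReal_le_ofReal hterm
      _ ≤ ∑' j, ENNReal.ofReal (|Xs j ω| * P j ω) := ENNReal.le_tsum j
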